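/- Every edge (u,v) of BH_n (n ≥ 2) lies on an 8-cycle C of BH_n such that for each i ∈ {0,1,2,3}, C contains exactly one edge lying inside the copy BH_{n-1}^i (the subgraph induced by vertices whose last coordinate equals i). -/

import Mathlib

open SimpleGraph

/-- One step of the balanced-hypercube adjacency relation. -/
def bhRel (n : ℕ) (u v : Fin n → ZMod 4) : Prop :=
  ∃ (hn : 0 < n) (s : ZMod 4), (s = 1 ∨ s = -1) ∧
    (v = Function.update u ⟨0, hn⟩ (u ⟨0, hn⟩ + s) ∨
      ∃ i : Fin n, i ≠ ⟨0, hn⟩ ∧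
        v = Function.update (Function.update u ⟨0, hn⟩ (u ⟨0, hn⟩ + s)) i
              (u i + (if Even (u ⟨0, hn⟩).val then 1 else -1)))

/-- The balanced hypercube `BH n` on vertex set `{0,1,2,3}^n`. -/
def BH (n : ℕ) : SimpleGraph (Fin n → ZMod 4) :=
  SimpleGraph.fromRel (bhRel n)

/-- A vertex is white if its inner index is even. -/
def IsWhite {n : ℕ} (hn : 0 < n) (u : Fin n → ZMod 4) : Prop :=
  Even (u ⟨0, hn⟩).val

/-- A vertex is black if its inner index is odd. -/
def IsBlack {n : ℕ} (hn : 0 < n) (u : Fin n → ZMod 4) : Prop :=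
  Odd (u ⟨0, hn⟩).val

namespace BHAux

def eps (x : ZMod 4) : ZMod 4 := if Even x.val then 1 else -1

lemma eps_or (x : ZMod 4) : eps x = 1 ∨ eps x = -1 := by unfold eps; split <;> simp

lemma eps_ne_zero (x : ZMod 4) : eps x ≠ 0 := by rcases eps_or x with h | h <;> rw [h] <;> decide

lemma eps_shift {s : ZMod 4} (hs : s = 1 ∨ s = -1) (x : ZMod 4) : eps (x + s) = -eps x := by
  rcases hs with rfl | rfl <;> revert x <;> decide

variable {n : ℕ}

def st0 (hn : 0 < n) (s : ZMod 4) (w : Fin n → ZMod 4) : Fin n → ZMod 4 :=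
  Function.update w ⟨0, hn⟩ (w ⟨0, hn⟩ + s)

def stJ (hn : 0 < n) (j : Fin n) (s : ZMod 4) (w : Fin n → ZMod 4) : Fin n → ZMod 4 :=
  Function.update (st0 hn s w) j (w j + eps (w ⟨0, hn⟩))

lemma adj_st0 (hn : 0 < n) {s : ZMod 4} (hs : s = 1 ∨ s = -1) (w : Fin n → ZMod 4) :
    (BH n).Adj w (st0 hn s w) := by
  rw [BH, fromRel_adj]
  refine ⟨fun h => ?_, Or.inl ⟨hn, s, hs, Or.inl rfl⟩⟩
  have h0 := congrFun h ⟨0, hn⟩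
  rw [st0, Function.update_self] at h0
  have hs0 : s ≠ 0 := by rcases hs with rfl | rfl <;> decide
  exact hs0 (left_eq_add.mp h0)

lemma adj_stJ (hn : 0 < n) {j : Fin n} (hj : j ≠ ⟨0, hn⟩) {s : ZMod 4} (hs : s = 1 ∨ s = -1)
    (w : Fin n → ZMod 4) : (BH n).Adj w (stJ hn j s w) := by
  rw [BH, fromRel_adj]
  refine ⟨fun h => ?_, Or.inl ⟨hn, s, hs, Or.inr ⟨j, hj, rfl⟩⟩⟩
  have h0 := congrFun h j
  rw [stJ, Function.update_self] at h0
  exact eps_ne_zero (w ⟨0, hn⟩) (left_eq_add.mp h0)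

lemma filter_map_length {α β : Type*} (g : α → β) (P : β → Bool) (l : List α) :
    (l.filter fun e => P (g e)).length = ((l.map g).filter P).length := by
  induction l with
  | nil => rfl
  | cons e t ih => by_cases h : P (g e) <;> simp [List.filter_cons, h, ih]

lemma bhRel_symm {u v : Fin n → ZMod 4} (h : bhRel n v u) : bhRel n u v := by
  obtain ⟨hn', s, hs, h | ⟨i, hi, h⟩⟩ := h
  · refine ⟨hn', -s, by rcases hs with rfl | rfl <;> simp, Or.inl ?_⟩
    subst h
    funext p
    rcases eq_or_ne p ⟨0, hn'⟩ with rfl | hp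
    · simp
    · simp [Function.update_of_ne hp]
  · refine ⟨hn', -s, by rcases hs with rfl | rfl <;> simp, Or.inr ⟨i, hi, ?_⟩⟩
    subst h
    have huz : Function.update (Function.update v ⟨0, hn'⟩ (v ⟨0, hn'⟩ + s)) i
        (v i + (if Even (v ⟨0, hn'⟩).val then 1 else -1)) ⟨0, hn'⟩ = v ⟨0, hn'⟩ + s := by
      rw [Function.update_of_ne (Ne.symm hi), Function.update_self]
    have hui : Function.update (Function.update v ⟨0, hn'⟩ (v ⟨0, hn'⟩ + s)) i
        (v i + (if Even (v ⟨0, hn'⟩).val then 1 else -1)) i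
        = v i + (if Even (v ⟨0, hn'⟩).val then 1 else -1) := Function.update_self _ _ _
    funext p
    rcases eq_or_ne p i with rfl | hp
    · rw [Function.update_self, hui, huz]
      have h2 : (if Even ((v ⟨0, hn'⟩ + s)).val then (1 : ZMod 4) else -1)
          = - (if Even ((v ⟨0, hn'⟩)).val then (1 : ZMod 4) else -1) := eps_shift hs _
      rw [h2]
      ring
    · rw [Function.update_of_ne hp]
      rcases eq_or_ne p ⟨0, hn'⟩ with rfl | hp2
      · rw [Function.update_self, huz]; ring
      · rw [Function.update_of_ne hp2, Function.update_of_ne hp, Function.update_of_ne hp2]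

end BHAux

open BHAux

/-- Every edge of `BH n` (`n ≥ 2`) lies on an 8-cycle having exactly one edge
inside each of the four copies `BH_{n-1}^i` (vertices whose last coordinate is `i`). -/
theorem BH_edge_in_eight_cycle (n : ℕ) (hn : 2 ≤ n) (u v : Fin n → ZMod 4)
    (huv : (BH n).Adj u v) :
    ∃ c : (BH n).Walk u u, c.IsCycle ∧ c.length = 8 ∧ s(u, v) ∈ c.edges ∧
      ∀ i : ZMod 4,
        (c.edges.filter
          (fun e => Sym2.map (fun w => w ⟨n - 1, by omega⟩) e = s(i, i))).length = 1 := by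
  have hn0 : 0 < n := by omega
  set zz : Fin n := ⟨0, hn0⟩ with hzzdef
  set dd : Fin n := ⟨n - 1, by omega⟩ with hdddef
  have hzd : zz ≠ dd := by
    simp only [zz, dd, ne_eq, Fin.mk.injEq]; omega
  rw [BH, SimpleGraph.fromRel_adj] at huv
  obtain ⟨hne, hrel⟩ := huv
  have hrel' : bhRel n u v := hrel.elim id bhRel_symm
  obtain ⟨hn', s, hs, hcase⟩ := hrel'
  obtain ⟨σ, hσor, hσ⟩ : ∃ σ, (σ = 1 ∨ σ = -1) ∧ eps (u zz) = σ := ⟨_, eps_or _, rfl⟩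
  have hε := eps_shift hs
  have hs4 : s + s + s + s = 0 := by rcases hs with rfl | rfl <;> decide
  have hσ4 : -σ + -σ + -σ + -σ = 0 := by rcases hσor with rfl | rfl <;> decide
  have hσ4' : σ + σ + σ + σ = 0 := by rcases hσor with rfl | rfl <;> decide
  have he0 : eps (u zz + 0) = σ := by rw [add_zero, hσ]
  have he1 : eps (u zz + s) = -σ := by rw [hε, hσ]
  have he2 : eps (u zz + (s + s)) = σ := by rw [← add_assoc, hε, he1, neg_neg]
  have he3 : eps (u zz + (s + s + s)) = -σ := by
    rw [← add_assoc, hε, he2]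
  rcases hcase with hv | ⟨ii, hiz, hv⟩
  · -- Case A : the edge changes only coordinate 0
    set W : ZMod 4 → ZMod 4 → (Fin n → ZMod 4) :=
      fun a b => Function.update (Function.update u dd (u dd + b)) zz (u zz + a) with hWdef
    have hWz : ∀ a b, W a b zz = u zz + a := fun a b => Function.update_self _ _ _
    have hWd : ∀ a b, W a b dd = u dd + b := fun a b => by
      rw [hWdef]
      simp only []
      rw [Function.update_of_ne (Ne.symm hzd), Function.update_self]
    have hWo : ∀ a b p, p ≠ zz → p ≠ dd → W a b p = u p := fun a b p h1 h2 => by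
      rw [hWdef]
      simp only []
      rw [Function.update_of_ne h1, Function.update_of_ne h2]
    have hW00 : W 0 0 = u := by
      funext p
      rcases eq_or_ne p zz with rfl | h1
      · rw [hWz, add_zero]
      · rcases eq_or_ne p dd with rfl | h2
        · rw [hWd, add_zero]
        · rw [hWo _ _ _ h1 h2]
    have hst0W : ∀ a b, st0 hn0 s (W a b) = W (a + s) b := by
      intro a b
      funext p
      rcases eq_or_ne p zz with rfl | h1
      · rw [st0, Function.update_self, hWz, hWz, add_assoc]
      · rw [st0, Function.update_of_ne h1]
        rcases eq_or_ne p dd with rfl | h2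
        · rw [hWd, hWd]
        · rw [hWo _ _ _ h1 h2, hWo _ _ _ h1 h2]
    have hstdW : ∀ a b, stJ hn0 dd s (W a b) = W (a + s) (b + eps (u zz + a)) := by
      intro a b
      funext p
      rcases eq_or_ne p dd with rfl | h2
      · rw [stJ, Function.update_self, hWd, hWz, hWd, add_assoc]
      · rw [stJ, Function.update_of_ne h2, st0]
        rcases eq_or_ne p zz with rfl | h1
        · rw [Function.update_self, hWz, hWz, add_assoc]
        · rw [Function.update_of_ne h1, hWo _ _ _ h1 h2, hWo _ _ _ h1 h2]
    have hA0 : ∀ a b, (BH n).Adj (W a b) (W (a + s) b) := fun a b =>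
      (hst0W a b) ▸ adj_st0 hn0 hs (W a b)
    have hAd : ∀ a b, (BH n).Adj (W a b) (W (a + s) (b + eps (u zz + a))) := fun a b =>
      (hstdW a b) ▸ adj_stJ hn0 (Ne.symm hzd) hs (W a b)
    have h01 : (BH n).Adj u (W s 0) := by
      have h := hA0 0 0
      rwa [hW00, zero_add] at h
    have h12 : (BH n).Adj (W s 0) (W (s + s) (-σ)) := by
      have h := hAd s 0
      rwa [he1, zero_add] at h
    have h23 : (BH n).Adj (W (s + s) (-σ)) (W (s + s + s) (-σ)) := hA0 _ _
    have h34 : (BH n).Adj (W (s + s + s) (-σ)) (W 0 (-σ + -σ)) := by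
      have h := hAd (s + s + s) (-σ)
      rwa [he3, hs4] at h
    have h45 : (BH n).Adj (W 0 (-σ + -σ)) (W s (-σ + -σ)) := by
      have h := hA0 0 (-σ + -σ)
      rwa [zero_add] at h
    have h56 : (BH n).Adj (W s (-σ + -σ)) (W (s + s) (-σ + -σ + -σ)) := by
      have h := hAd s (-σ + -σ)
      rwa [he1] at h
    have h67 : (BH n).Adj (W (s + s) (-σ + -σ + -σ)) (W (s + s + s) (-σ + -σ + -σ)) := hA0 _ _
    have h78 : (BH n).Adj (W (s + s + s) (-σ + -σ + -σ)) u := by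
      have h := hAd (s + s + s) (-σ + -σ + -σ)
      rwa [he3, hs4, hσ4, hW00] at h
    have hv' : v = W s 0 := by
      rw [hv]
      have h := hst0W 0 0
      rw [hW00, zero_add] at h
      exact h
    set φ : (Fin n → ZMod 4) → ZMod 4 × ZMod 4 := fun w => (w zz - u zz, w dd - u dd) with hφdef
    have hφW : ∀ a b, φ (W a b) = (a, b) := fun a b => by
      rw [hφdef]; simp only []; rw [hWz, hWd]; simp
    have hφu : φ u = (0, 0) := by rw [hφdef]; simp
    refine ⟨Walk.cons h01 (Walk.cons h12 (Walk.cons h23 (Walk.cons h34 (Walk.cons h45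
      (Walk.cons h56 (Walk.cons h67 (Walk.cons h78 Walk.nil))))))), ?_, rfl, ?_, ?_⟩
    · rw [SimpleGraph.Walk.cons_isCycle_iff]
      constructor
      · rw [SimpleGraph.Walk.isPath_def]
        refine List.Nodup.of_map φ ?_
        simp only [Walk.support_cons, Walk.support_nil, List.map_cons, List.map_nil,
          hφW, hφu]
        rcases hs with rfl | rfl <;> rcases hσor with rfl | rfl <;> decide
      · intro hmem2
        have hmem3 := List.mem_map_of_mem (f := Sym2.map φ) hmem2
        simp only [Walk.edges_cons, Walk.edges_nil, List.map_cons, List.map_nil,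
          Sym2.map_pair_eq, hφW, hφu, List.mem_cons, List.not_mem_nil] at hmem3
        revert hmem3
        rcases hs with rfl | rfl <;> rcases hσor with rfl | rfl <;> decide
    · rw [hv']
      simp [Walk.edges_cons]
    · intro i
      refine Eq.trans (filter_map_length (Sym2.map (fun w : Fin n → ZMod 4 => w dd))
        (fun y => decide (y = s(i, i))) _) ?_
      simp only [Walk.edges_cons, Walk.edges_nil, List.map_cons, List.map_nil,
        Sym2.map_pair_eq, hWd]
      generalize u dd = x
      revert i
      revert x
      rcases hs with rfl | rfl <;> rcases hσor with rfl | rfl <;> decide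
  · -- the edge changes coordinate 0 and coordinate ii
    rcases eq_or_ne ii dd with rfl | hid
    · -- Case B : ii = dd, a crossing edge
      set W : ZMod 4 → ZMod 4 → (Fin n → ZMod 4) :=
        fun a b => Function.update (Function.update u dd (u dd + b)) zz (u zz + a) with hWdef
      have hWz : ∀ a b, W a b zz = u zz + a := fun a b => Function.update_self _ _ _
      have hWd : ∀ a b, W a b dd = u dd + b := fun a b => by
        rw [hWdef]
        simp only []
        rw [Function.update_of_ne (Ne.symm hzd), Function.update_self]
      have hWo : ∀ a b p, p ≠ zz → p ≠ dd → W a b p = u p := fun a b p h1 h2 => by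
        rw [hWdef]
        simp only []
        rw [Function.update_of_ne h1, Function.update_of_ne h2]
      have hW00 : W 0 0 = u := by
        funext p
        rcases eq_or_ne p zz with rfl | h1
        · rw [hWz, add_zero]
        · rcases eq_or_ne p dd with rfl | h2
          · rw [hWd, add_zero]
          · rw [hWo _ _ _ h1 h2]
      have hst0W : ∀ a b, st0 hn0 s (W a b) = W (a + s) b := by
        intro a b
        funext p
        rcases eq_or_ne p zz with rfl | h1
        · rw [st0, Function.update_self, hWz, hWz, add_assoc]
        · rw [st0, Function.update_of_ne h1]
          rcases eq_or_ne p dd with rfl | h2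
          · rw [hWd, hWd]
          · rw [hWo _ _ _ h1 h2, hWo _ _ _ h1 h2]
      have hstdW : ∀ a b, stJ hn0 dd s (W a b) = W (a + s) (b + eps (u zz + a)) := by
        intro a b
        funext p
        rcases eq_or_ne p dd with rfl | h2
        · rw [stJ, Function.update_self, hWd, hWz, hWd, add_assoc]
        · rw [stJ, Function.update_of_ne h2, st0]
          rcases eq_or_ne p zz with rfl | h1
          · rw [Function.update_self, hWz, hWz, add_assoc]
          · rw [Function.update_of_ne h1, hWo _ _ _ h1 h2, hWo _ _ _ h1 h2]
      have hA0 : ∀ a b, (BH n).Adj (W a b) (W (a + s) b) := fun a b =>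
        (hst0W a b) ▸ adj_st0 hn0 hs (W a b)
      have hAd : ∀ a b, (BH n).Adj (W a b) (W (a + s) (b + eps (u zz + a))) := fun a b =>
        (hstdW a b) ▸ adj_stJ hn0 (Ne.symm hzd) hs (W a b)
      have h01 : (BH n).Adj u (W s σ) := by
        have h := hAd 0 0
        rwa [hW00, he0, zero_add, zero_add] at h
      have h12 : (BH n).Adj (W s σ) (W (s + s) σ) := hA0 _ _
      have h23 : (BH n).Adj (W (s + s) σ) (W (s + s + s) (σ + σ)) := by
        have h := hAd (s + s) σ
        rwa [he2] at h
      have h34 : (BH n).Adj (W (s + s + s) (σ + σ)) (W 0 (σ + σ)) := by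
        have h := hA0 (s + s + s) (σ + σ)
        rwa [hs4] at h
      have h45 : (BH n).Adj (W 0 (σ + σ)) (W s (σ + σ + σ)) := by
        have h := hAd 0 (σ + σ)
        rwa [zero_add, he0] at h
      have h56 : (BH n).Adj (W s (σ + σ + σ)) (W (s + s) (σ + σ + σ)) := hA0 _ _
      have h67 : (BH n).Adj (W (s + s) (σ + σ + σ)) (W (s + s + s) 0) := by
        have h := hAd (s + s) (σ + σ + σ)
        rwa [he2, hσ4'] at h
      have h78 : (BH n).Adj (W (s + s + s) 0) u := by
        have h := hA0 (s + s + s) 0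
        rwa [hs4, hW00] at h
      have hv' : v = W s σ := by
        rw [hv]
        have h := hstdW 0 0
        rw [hW00, he0, zero_add, zero_add] at h
        exact h
      set φ : (Fin n → ZMod 4) → ZMod 4 × ZMod 4 := fun w => (w zz - u zz, w dd - u dd) with hφdef
      have hφW : ∀ a b, φ (W a b) = (a, b) := fun a b => by
        rw [hφdef]; simp only []; rw [hWz, hWd]; simp
      have hφu : φ u = (0, 0) := by rw [hφdef]; simp
      refine ⟨Walk.cons h01 (Walk.cons h12 (Walk.cons h23 (Walk.cons h34 (Walk.cons h45
        (Walk.cons h56 (Walk.cons h67 (Walk.cons h78 Walk.nil))))))), ?_, rfl, ?_, ?_⟩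
      · rw [SimpleGraph.Walk.cons_isCycle_iff]
        constructor
        · rw [SimpleGraph.Walk.isPath_def]
          refine List.Nodup.of_map φ ?_
          simp only [Walk.support_cons, Walk.support_nil, List.map_cons, List.map_nil,
            hφW, hφu]
          rcases hs with rfl | rfl <;> rcases hσor with rfl | rfl <;> decide
        · intro hmem2
          have hmem3 := List.mem_map_of_mem (f := Sym2.map φ) hmem2
          simp only [Walk.edges_cons, Walk.edges_nil, List.map_cons, List.map_nil,
            Sym2.map_pair_eq, hφW, hφu, List.mem_cons, List.not_mem_nil] at hmem3
          revert hmem3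
          rcases hs with rfl | rfl <;> rcases hσor with rfl | rfl <;> decide
      · rw [hv']
        simp [Walk.edges_cons]
      · intro i
        refine Eq.trans (filter_map_length (Sym2.map (fun w : Fin n → ZMod 4 => w dd))
          (fun y => decide (y = s(i, i))) _) ?_
        simp only [Walk.edges_cons, Walk.edges_nil, List.map_cons, List.map_nil,
          Sym2.map_pair_eq, hWd]
        generalize u dd = x
        revert i
        revert x
        rcases hs with rfl | rfl <;> rcases hσor with rfl | rfl <;> decide
    · -- Case C : ii is a middle coordinate
      set W : ZMod 4 → ZMod 4 → ZMod 4 → (Fin n → ZMod 4) :=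
        fun a b c => Function.update (Function.update (Function.update u ii (u ii + c)) dd
          (u dd + b)) zz (u zz + a) with hWdef
      have hWz : ∀ a b c, W a b c zz = u zz + a := fun a b c => Function.update_self _ _ _
      have hWd : ∀ a b c, W a b c dd = u dd + b := fun a b c => by
        rw [hWdef]
        simp only []
        rw [Function.update_of_ne (Ne.symm hzd), Function.update_self]
      have hWi : ∀ a b c, W a b c ii = u ii + c := fun a b c => by
        rw [hWdef]
        simp only []
        rw [Function.update_of_ne hiz, Function.update_of_ne hid, Function.update_self]
      have hWo : ∀ a b c p, p ≠ zz → p ≠ dd → p ≠ ii → W a b c p = u p :=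
        fun a b c p h1 h2 h3 => by
        rw [hWdef]
        simp only []
        rw [Function.update_of_ne h1, Function.update_of_ne h2, Function.update_of_ne h3]
      have hW00 : W 0 0 0 = u := by
        funext p
        rcases eq_or_ne p zz with rfl | h1
        · rw [hWz, add_zero]
        · rcases eq_or_ne p dd with rfl | h2
          · rw [hWd, add_zero]
          · rcases eq_or_ne p ii with rfl | h3
            · rw [hWi, add_zero]
            · rw [hWo _ _ _ _ h1 h2 h3]
      have hstiW : ∀ a b c, stJ hn0 ii s (W a b c) = W (a + s) b (c + eps (u zz + a)) := by
        intro a b c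
        funext p
        rcases eq_or_ne p ii with rfl | h3
        · rw [stJ, Function.update_self, hWi, hWz, hWi, add_assoc]
        · rw [stJ, Function.update_of_ne h3, st0]
          rcases eq_or_ne p zz with rfl | h1
          · rw [Function.update_self, hWz, hWz, add_assoc]
          · rw [Function.update_of_ne h1]
            rcases eq_or_ne p dd with rfl | h2
            · rw [hWd, hWd]
            · rw [hWo _ _ _ _ h1 h2 h3, hWo _ _ _ _ h1 h2 h3]
      have hstdW : ∀ a b c, stJ hn0 dd s (W a b c) = W (a + s) (b + eps (u zz + a)) c := by
        intro a b c
        funext p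
        rcases eq_or_ne p dd with rfl | h2
        · rw [stJ, Function.update_self, hWd, hWz, hWd, add_assoc]
        · rw [stJ, Function.update_of_ne h2, st0]
          rcases eq_or_ne p zz with rfl | h1
          · rw [Function.update_self, hWz, hWz, add_assoc]
          · rw [Function.update_of_ne h1]
            rcases eq_or_ne p ii with rfl | h3
            · rw [hWi, hWi]
            · rw [hWo _ _ _ _ h1 h2 h3, hWo _ _ _ _ h1 h2 h3]
      have hAi : ∀ a b c, (BH n).Adj (W a b c) (W (a + s) b (c + eps (u zz + a))) :=
        fun a b c => (hstiW a b c) ▸ adj_stJ hn0 hiz hs (W a b c)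
      have hAd : ∀ a b c, (BH n).Adj (W a b c) (W (a + s) (b + eps (u zz + a)) c) :=
        fun a b c => (hstdW a b c) ▸ adj_stJ hn0 (Ne.symm hzd) hs (W a b c)
      have h01 : (BH n).Adj u (W s 0 σ) := by
        have h := hAi 0 0 0
        rwa [hW00, he0, zero_add, zero_add] at h
      have h12 : (BH n).Adj (W s 0 σ) (W (s + s) (-σ) σ) := by
        have h := hAd s 0 σ
        rwa [he1, zero_add] at h
      have h23 : (BH n).Adj (W (s + s) (-σ) σ) (W (s + s + s) (-σ) (σ + σ)) := by
        have h := hAi (s + s) (-σ) σ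
        rwa [he2] at h
      have h34 : (BH n).Adj (W (s + s + s) (-σ) (σ + σ)) (W 0 (-σ + -σ) (σ + σ)) := by
        have h := hAd (s + s + s) (-σ) (σ + σ)
        rwa [he3, hs4] at h
      have h45 : (BH n).Adj (W 0 (-σ + -σ) (σ + σ)) (W s (-σ + -σ) (σ + σ + σ)) := by
        have h := hAi 0 (-σ + -σ) (σ + σ)
        rwa [zero_add, he0] at h
      have h56 : (BH n).Adj (W s (-σ + -σ) (σ + σ + σ)) (W (s + s) (-σ + -σ + -σ) (σ + σ + σ)) := by
        have h := hAd s (-σ + -σ) (σ + σ + σ)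
        rwa [he1] at h
      have h67 : (BH n).Adj (W (s + s) (-σ + -σ + -σ) (σ + σ + σ))
          (W (s + s + s) (-σ + -σ + -σ) 0) := by
        have h := hAi (s + s) (-σ + -σ + -σ) (σ + σ + σ)
        rwa [he2, hσ4'] at h
      have h78 : (BH n).Adj (W (s + s + s) (-σ + -σ + -σ) 0) u := by
        have h := hAd (s + s + s) (-σ + -σ + -σ) 0
        rwa [he3, hs4, hσ4, hW00] at h
      have hv' : v = W s 0 σ := by
        rw [hv]
        have h := hstiW 0 0 0
        rw [hW00, he0, zero_add, zero_add] at h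
        exact h
      set φ : (Fin n → ZMod 4) → ZMod 4 × ZMod 4 × ZMod 4 :=
        fun w => (w zz - u zz, w dd - u dd, w ii - u ii) with hφdef
      have hφW : ∀ a b c, φ (W a b c) = (a, b, c) := fun a b c => by
        rw [hφdef]; simp only []; rw [hWz, hWd, hWi]; simp
      have hφu : φ u = (0, 0, 0) := by rw [hφdef]; simp
      refine ⟨Walk.cons h01 (Walk.cons h12 (Walk.cons h23 (Walk.cons h34 (Walk.cons h45
        (Walk.cons h56 (Walk.cons h67 (Walk.cons h78 Walk.nil))))))), ?_, rfl, ?_, ?_⟩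
      · rw [SimpleGraph.Walk.cons_isCycle_iff]
        constructor
        · rw [SimpleGraph.Walk.isPath_def]
          refine List.Nodup.of_map φ ?_
          simp only [Walk.support_cons, Walk.support_nil, List.map_cons, List.map_nil,
            hφW, hφu]
          rcases hs with rfl | rfl <;> rcases hσor with rfl | rfl <;> decide
        · intro hmem2
          have hmem3 := List.mem_map_of_mem (f := Sym2.map φ) hmem2
          simp only [Walk.edges_cons, Walk.edges_nil, List.map_cons, List.map_nil,
            Sym2.map_pair_eq, hφW, hφu, List.mem_cons, List.not_mem_nil] at hmem3
          revert hmem3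
          rcases hs with rfl | rfl <;> rcases hσor with rfl | rfl <;> decide
      · rw [hv']
        simp [Walk.edges_cons]
      · intro i
        refine Eq.trans (filter_map_length (Sym2.map (fun w : Fin n → ZMod 4 => w dd))
          (fun y => decide (y = s(i, i))) _) ?_
        simp only [Walk.edges_cons, Walk.edges_nil, List.map_cons, List.map_nil,
          Sym2.map_pair_eq, hWd]
        generalize u dd = x
        revert i
        revert x
        rcases hs with rfl | rfl <;> rcases hσor with rfl | rfl <;> decide
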